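/- Let X* ⊂ R^n be nonempty and closed, x* ∈ X*, and suppose: (a) quadratic growth: there exist κ₂ > 0 and a neighborhood of x* on which F_*(x) − F_*(x*) ≥ κ₂ dist(x, X*)²; (b) envelope upper bound: F_*(y) − F_*(x*) ≤ L̃ dist(y, X*)² for y near x*; (c) the chain of inequalities F_*(x^k) ≤ F(x^k) ≤ F_{γ_k}(y^k) ≤ F_*(y^k) for all large k. Then dist(x^k, X*) ≤ √(L̃/κ₂) · dist(y^k, X*) for all large k. Consequently, if dist(y^{k+1}, X*) ≤ c̃ dist(x^k, X*)^{1+τ} with c̃ > 0, τ ∈ (0,1), then limsup_k dist(y^{k+1}, X*)/dist(y^k, X*)^{1+τ} ≤ c̃ (L̃/κ₂)^{(1+τ)/2}, i.e., dist(y^k, X*) → 0 superlinearly with order 1+τ. -/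
import Mathlib


/-- superlinear convergence of the distance to the stationary set. -/
theorem superlinear_distance (n : ℕ) (Xs : Set (EuclideanSpace ℝ (Fin n)))
    (hXs : Xs.Nonempty) (hXsc : IsClosed Xs)
    (xstar : EuclideanSpace ℝ (Fin n)) (hxstar : xstar ∈ Xs)
    (Fs F : EuclideanSpace ℝ (Fin n) → ℝ)
    (Fγ : ℕ → EuclideanSpace ℝ (Fin n) → ℝ)
    (κ2 Lt : ℝ) (hκ2 : 0 < κ2) (hLt : 0 < Lt)
    (x y : ℕ → EuclideanSpace ℝ (Fin n))
    (hxconv : Filter.Tendsto x Filter.atTop (nhds xstar))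
    (hyconv : Filter.Tendsto y Filter.atTop (nhds xstar))
    (ha : ∃ ε > (0 : ℝ), ∀ z ∈ Metric.ball xstar ε,
      κ2 * Metric.infDist z Xs ^ 2 ≤ Fs z - Fs xstar)
    (hb : ∃ ε > (0 : ℝ), ∀ z ∈ Metric.ball xstar ε,
      Fs z - Fs xstar ≤ Lt * Metric.infDist z Xs ^ 2)
    (hc : ∀ᶠ k in Filter.atTop,
      Fs (x k) ≤ F (x k) ∧ F (x k) ≤ Fγ k (y k) ∧ Fγ k (y k) ≤ Fs (y k)) :
    (∀ᶠ k in Filter.atTop,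
      Metric.infDist (x k) Xs ≤ Real.sqrt (Lt / κ2) * Metric.infDist (y k) Xs) ∧
    ∀ ctil τ : ℝ, 0 < ctil → τ ∈ Set.Ioo (0 : ℝ) 1 →
      (∀ᶠ k in Filter.atTop,
        Metric.infDist (y (k + 1)) Xs ≤ ctil * Metric.infDist (x k) Xs ^ (1 + τ)) →
      Filter.limsup
        (fun k => Metric.infDist (y (k + 1)) Xs / Metric.infDist (y k) Xs ^ (1 + τ))
        Filter.atTop ≤ ctil * (Lt / κ2) ^ ((1 + τ) / 2) := by
  obtain ⟨εa, hεa, hA⟩ := ha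
  obtain ⟨εb, hεb, hB⟩ := hb
  have hx_ev : ∀ᶠ k in Filter.atTop, x k ∈ Metric.ball xstar εa :=
    hxconv (Metric.ball_mem_nhds _ hεa)
  have hy_ev : ∀ᶠ k in Filter.atTop, y k ∈ Metric.ball xstar εb :=
    hyconv (Metric.ball_mem_nhds _ hεb)
  have hsnn : (0:ℝ) ≤ Real.sqrt (Lt / κ2) := Real.sqrt_nonneg _
  have key : ∀ᶠ k in Filter.atTop,
      Metric.infDist (x k) Xs ≤ Real.sqrt (Lt / κ2) * Metric.infDist (y k) Xs := by
    filter_upwards [hx_ev, hy_ev, hc] with k hx hy hck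
    obtain ⟨h1, h2, h3⟩ := hck
    have hdx := hA _ hx
    have hdy := hB _ hy
    have hsq : κ2 * Metric.infDist (x k) Xs ^ 2 ≤ Lt * Metric.infDist (y k) Xs ^ 2 := by
      linarith
    have h0x : 0 ≤ Metric.infDist (x k) Xs := Metric.infDist_nonneg
    have h0y : 0 ≤ Metric.infDist (y k) Xs := Metric.infDist_nonneg
    have hsq2 : Metric.infDist (x k) Xs ^ 2 ≤
        (Real.sqrt (Lt / κ2) * Metric.infDist (y k) Xs) ^ 2 := by
      rw [mul_pow, Real.sq_sqrt (by positivity)]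
      rw [div_mul_eq_mul_div, le_div_iff₀ hκ2]
      nlinarith
    nlinarith [mul_nonneg hsnn h0y]
  refine ⟨key, ?_⟩
  intro ctil τ hctil hτ hstep
  have hτ0 : (0:ℝ) < 1 + τ := by linarith [hτ.1]
  have hC : (0:ℝ) ≤ ctil * (Lt / κ2) ^ ((1 + τ) / 2) := by positivity
  have hev : ∀ᶠ k in Filter.atTop,
      Metric.infDist (y (k + 1)) Xs / Metric.infDist (y k) Xs ^ (1 + τ) ≤
        ctil * (Lt / κ2) ^ ((1 + τ) / 2) := by
    filter_upwards [key, hstep] with k hk hs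
    have h0y : 0 ≤ Metric.infDist (y k) Xs := Metric.infDist_nonneg
    have h0x : 0 ≤ Metric.infDist (x k) Xs := Metric.infDist_nonneg
    rcases eq_or_lt_of_le h0y with hd | hd
    · rw [← hd, Real.zero_rpow (by positivity : (1:ℝ)+τ ≠ 0), div_zero]
      exact hC
    · rw [div_le_iff₀ (Real.rpow_pos_of_pos hd _)]
      calc Metric.infDist (y (k + 1)) Xs
          ≤ ctil * Metric.infDist (x k) Xs ^ (1 + τ) := hs
        _ ≤ ctil * (Real.sqrt (Lt / κ2) * Metric.infDist (y k) Xs) ^ (1 + τ) := by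
            exact mul_le_mul_of_nonneg_left (Real.rpow_le_rpow h0x hk hτ0.le) hctil.le
        _ = ctil * (Lt / κ2) ^ ((1 + τ) / 2) * Metric.infDist (y k) Xs ^ (1 + τ) := by
            rw [Real.mul_rpow hsnn h0y, Real.sqrt_eq_rpow,
              ← Real.rpow_mul (by positivity : (0:ℝ) ≤ Lt / κ2)]
            ring_nf
  exact Filter.limsup_le_of_le
    (Filter.isCoboundedUnder_le_of_le Filter.atTop (x := 0)
      (fun k => div_nonneg Metric.infDist_nonneg (Real.rpow_nonneg Metric.infDist_nonneg _))) hev
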